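/- In the setting of the previous construction ($n = 2m$, $m \geq 3$ odd, $G = D_n$, $\varphi : P \to I$ surjective), the kernel $C = \ker(\varphi)$ is free of $\mathbb{Z}$-rank $2m + 1$, and the elements $a_i = \alpha_i + \beta_i$ ($1 \leq i \leq m$), $b_i = x^{i-1}(\alpha_1 + \beta_m - \gamma_1 - \gamma_{m+1})$ ($1 \leq i \leq m$), $c_1 = \sum_{i=1}^m \alpha_i$ form a $\mathbb{Z}$-basis of $C$. -/

import Mathlib

theorem aux_rho_apply (m : ℕ) [NeZero m] (k : ZMod (2*m)) :
    (ZMod.castHom (⟨2, by ring⟩ : m ∣ 2*m) (ZMod m)) k = (k.val : ZMod m) := by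
  simp [ZMod.castHom_apply, ZMod.natCast_val]

theorem aux_half (m : ℕ) (hm : 3 ≤ m) (k : ZMod (2*m)) :
    haveI : NeZero m := ⟨Nat.pos_iff_ne_zero.mp (by omega)⟩
    k = ((((ZMod.castHom (⟨2, by ring⟩ : m ∣ 2*m) (ZMod m)) k).val : ZMod (2*m))) ∨
    k = (m : ZMod (2*m)) + (((ZMod.castHom (⟨2, by ring⟩ : m ∣ 2*m) (ZMod m)) k).val : ZMod (2*m)) := by
  haveI : NeZero m := ⟨Nat.pos_iff_ne_zero.mp (by omega)⟩
  haveI : NeZero (2*m) := ⟨by omega⟩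
  rw [aux_rho_apply, ZMod.val_natCast]
  have hk : k.val < 2*m := ZMod.val_lt k
  rcases lt_or_ge k.val m with h | h
  · left
    rw [Nat.mod_eq_of_lt h, ZMod.natCast_zmod_val]
  · right
    have h2 : k.val % m = k.val - m := by
      rw [Nat.mod_eq_sub_mod h, Nat.mod_eq_of_lt (by omega)]
    rw [h2]
    have : (m : ZMod (2*m)) + ((k.val - m : ℕ) : ZMod (2*m)) = ((m + (k.val - m) : ℕ) : ZMod (2*m)) := by push_cast; ring
    rw [this, show m + (k.val - m) = k.val by omega, ZMod.natCast_zmod_val]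

theorem aux_fiber (m : ℕ) (hm : 3 ≤ m) (a b : ZMod (2*m))
    (h : (ZMod.castHom (⟨2, by ring⟩ : m ∣ 2*m) (ZMod m)) a = (ZMod.castHom (⟨2, by ring⟩ : m ∣ 2*m) (ZMod m)) b) :
    b = a ∨ b = a + m := by
  haveI : NeZero m := ⟨Nat.pos_iff_ne_zero.mp (by omega)⟩
  have hmm : (m : ZMod (2*m)) + m = 0 := by
    have h2 : ((2*m : ℕ) : ZMod (2*m)) = 0 := ZMod.natCast_self _
    push_cast at h2; linear_combination h2
  rcases aux_half m hm a with ha | ha <;> rcases aux_half m hm b with hb | hb <;>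
    rw [h] at ha
  · exact Or.inl (hb.trans ha.symm)
  · right; rw [hb, ha]; ring
  · right; rw [hb, ha]; linear_combination -hmm
  · exact Or.inl (hb.trans ha.symm)

-- φ(b_i) = 0 core identity, with abstract single-function s
theorem aux_key1 (N : ℕ) (s : ZMod N → (ZMod N → ℤ)) (μ v w : ZMod N) (hμ : μ + μ = 0)
    (hw : w = v - 1 ∨ w = v - 1 + μ) :
    ((s v - s (v+1)) + (s (μ+v) - s (μ+v+1)))
    + (-((s w - s (w+1)) + (s (μ+w) - s (μ+w+1))))
    - ((s v - s (v + μ - 1)) + (s (v+μ) - s (v+μ+1)))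
    - ((s (μ+v) - s (μ+v+μ-1)) + (s (μ+v+μ) - s (μ+v+μ+1))) = 0 := by
  have e1 : μ + v + μ - 1 = v - 1 := by linear_combination hμ
  have e2 : μ + v + μ = v := by linear_combination hμ
  have e3 : μ + v + μ + 1 = v + 1 := by linear_combination hμ
  have e4 : v + μ = μ + v := by ring
  have e5 : μ + v - 1 = μ + (v-1) := by ring
  have e6 : v + μ + 1 = μ + v + 1 := by ring
  rcases hw with hw | hw <;> subst hw
  · have g1 : v - 1 + 1 = v := by ring
    have g2 : μ + (v - 1) + 1 = μ + v := by ring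
    rw [e1, e3, e2, e4, e5, g1, g2]
    abel
  · have g1 : v - 1 + μ = μ + (v - 1) := by ring
    have g2 : μ + (v-1) + 1 = μ + v := by ring
    have g3 : μ + (v - 1 + μ) = v - 1 := by linear_combination hμ
    have g4 : v - 1 + 1 = v := by ring
    rw [e1, e3, e2, e4, e5]
    rw [show v - 1 + μ + 1 = μ + v from by ring, g3, g1, g4]
    abel

theorem aux_tel (N : ℕ) (s : ZMod N → (ZMod N → ℤ)) (j : ZMod N) (k : ℕ) :
    ∑ l ∈ Finset.range k, (s (j + (l : ZMod N)) - s (j + (l : ZMod N) + 1)) = s j - s (j + (k : ZMod N)) := by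
  induction k with
  | zero => simp
  | succ k ih =>
    rw [Finset.sum_range_succ, ih]
    have : j + ((k+1 : ℕ) : ZMod N) = j + (k : ZMod N) + 1 := by push_cast; ring
    rw [this]; abel

theorem aux_rho_val (m : ℕ) (hm : 3 ≤ m) (i : ZMod m) :
    haveI : NeZero m := ⟨Nat.pos_iff_ne_zero.mp (by omega)⟩
    (ZMod.castHom (⟨2, by ring⟩ : m ∣ 2*m) (ZMod m)) ((i.val : ZMod (2*m))) = i := by
  haveI : NeZero m := ⟨Nat.pos_iff_ne_zero.mp (by omega)⟩
  haveI : NeZero (2*m) := ⟨by omega⟩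
  rw [aux_rho_apply, ZMod.val_cast_of_lt (lt_of_lt_of_le (ZMod.val_lt i) (by omega)), ZMod.natCast_zmod_val]

theorem aux_sum0 (m : ℕ) (hm : 3 ≤ m) (s : ZMod (2*m) → (ZMod (2*m) → ℤ)) :
    haveI : NeZero m := ⟨Nat.pos_iff_ne_zero.mp (by omega)⟩
    ∑ i : ZMod m, ((s ((i.val : ZMod (2*m))) - s ((i.val : ZMod (2*m)) + 1))
      + (s ((m:ZMod (2*m)) + (i.val : ZMod (2*m))) - s ((m:ZMod (2*m)) + (i.val : ZMod (2*m)) + 1))) = 0 := by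
  haveI : NeZero m := ⟨Nat.pos_iff_ne_zero.mp (by omega)⟩
  have hmm : (m : ZMod (2*m)) + m = 0 := by
    have h2 : ((2*m : ℕ) : ZMod (2*m)) = 0 := ZMod.natCast_self _
    push_cast at h2; linear_combination h2
  set ρ := (ZMod.castHom (⟨2, by ring⟩ : m ∣ 2*m) (ZMod m)) with hρ
  set T : ZMod m → (ZMod (2*m) → ℤ) := fun i => s ((i.val : ZMod (2*m))) + s ((m:ZMod (2*m)) + (i.val : ZMod (2*m))) with hT
  have step : ∀ i : ZMod m, (s ((i.val : ZMod (2*m))) - s ((i.val : ZMod (2*m)) + 1))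
      + (s ((m:ZMod (2*m)) + (i.val : ZMod (2*m))) - s ((m:ZMod (2*m)) + (i.val : ZMod (2*m)) + 1))
      = T i - T (i+1) := by
    intro i
    have hfib : ((((i+1).val : ZMod (2*m)))) = ((i.val : ZMod (2*m)) + 1) ∨
        (((i+1).val : ZMod (2*m))) = ((i.val : ZMod (2*m)) + 1) + m := by
      apply aux_fiber m hm
      rw [map_add, map_one, aux_rho_val m hm, aux_rho_val m hm]
    simp only [hT]
    rcases hfib with h | h
    · rw [h, show (m:ZMod (2*m)) + ((i.val : ZMod (2*m)) + 1) = (m:ZMod (2*m)) + (i.val : ZMod (2*m)) + 1 from by ring]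
      abel
    · rw [h]
      have r1 : (m:ZMod (2*m)) + ((i.val : ZMod (2*m)) + 1 + m) = (i.val : ZMod (2*m)) + 1 := by
        linear_combination hmm
      rw [r1, show ((i.val : ZMod (2*m)) + 1 + (m:ZMod (2*m))) = (m:ZMod (2*m)) + (i.val : ZMod (2*m)) + 1 from by ring]
      abel
  rw [Finset.sum_congr rfl (fun i _ => step i), Finset.sum_sub_distrib]
  have : ∑ i : ZMod m, T (i+1) = ∑ i : ZMod m, T i :=
    Fintype.sum_equiv (Equiv.addRight (1 : ZMod m)) _ _ (fun i => rfl)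
  rw [this, sub_self]

theorem aux_sum_ite {G : Type*} [Fintype G] [DecidableEq G] (C : G → ℤ)
    (p : G → Prop) [DecidablePred p] (a : G) (hp : ∀ j, p j ↔ j = a) :
    ∑ j, C j * (if p j then (1:ℤ) else 0) = C a := by
  rw [Finset.sum_congr rfl (fun j _ => by rw [if_congr (hp j) rfl rfl])]
  simp [mul_ite]

/-- In the setting of the construction for `n = 2m`, `m ≥ 3` odd, `G = D_n`:
the kernel `C = ker φ` is free of `ℤ`-rank `2m+1`, with `ℤ`-basis
`a_i = α_i + β_i`, `b_i = x^{i-1}(α_1 + β_m - γ_1 - γ_{m+1})` (`1 ≤ i ≤ m`) and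
`c_1 = α_1 + ⋯ + α_m`. -/
theorem stmt_4 (m : ℕ) (hm : 3 ≤ m) (hodd : Odd m)
    (f : ZMod (2 * m) → (ZMod (2 * m) → ℤ))
    (hf : ∀ i, f i = Pi.single i 1 - Pi.single (i + 1) 1)
    (φ : ((ZMod m ⊕ ZMod m ⊕ ZMod (2 * m)) → ℤ) →ₗ[ℤ] (ZMod (2 * m) → ℤ))
    (hφa : ∀ i : ZMod m, φ (Pi.single (Sum.inl i) 1) =
      f (i.val : ZMod (2 * m)) + f ((m : ZMod (2 * m)) + (i.val : ZMod (2 * m))))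
    (hφb : ∀ i : ZMod m, φ (Pi.single (Sum.inr (Sum.inl i)) 1) =
      -(f (i.val : ZMod (2 * m)) + f ((m : ZMod (2 * m)) + (i.val : ZMod (2 * m)))))
    (hφc : ∀ j : ZMod (2 * m), φ (Pi.single (Sum.inr (Sum.inr j)) 1) =
      (∑ l ∈ Finset.range (m - 1), f (j + (l : ZMod (2 * m)))) + f (j + (m : ZMod (2 * m))))
    (hsurj : LinearMap.range φ = Submodule.span ℤ (Set.range f)) :
    haveI : NeZero m := ⟨by omega⟩
    ∀ B : (ZMod m ⊕ ZMod m ⊕ Unit) → ((ZMod m ⊕ ZMod m ⊕ ZMod (2 * m)) → ℤ),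
      (∀ i : ZMod m, B (Sum.inl i) =
        Pi.single (Sum.inl i) 1 + Pi.single (Sum.inr (Sum.inl i)) 1) →
      (∀ i : ZMod m, B (Sum.inr (Sum.inl i)) =
        Pi.single (Sum.inl i) 1 + Pi.single (Sum.inr (Sum.inl (i - 1))) 1
          - Pi.single (Sum.inr (Sum.inr (i.val : ZMod (2 * m)))) 1
          - Pi.single (Sum.inr (Sum.inr ((m : ZMod (2 * m)) + (i.val : ZMod (2 * m))))) 1) →
      (B (Sum.inr (Sum.inr ())) = ∑ i : ZMod m, Pi.single (Sum.inl i) 1) →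
      (∀ t, φ (B t) = 0) ∧ LinearIndependent ℤ B ∧
        Submodule.span ℤ (Set.range B) = LinearMap.ker φ ∧
        Module.finrank ℤ ↥(LinearMap.ker φ) = 2 * m + 1 := by
  haveI : NeZero m := ⟨by omega⟩
  haveI : NeZero (2*m) := ⟨by omega⟩
  intro B hB1 hB2 hB3
  have hmm : (m : ZMod (2*m)) + m = 0 := by
    have h2 : ((2*m : ℕ) : ZMod (2*m)) = 0 := ZMod.natCast_self _
    push_cast at h2; linear_combination h2
  -- rewrite hφc into the 4-term form
  have hφc' : ∀ j : ZMod (2*m), φ (Pi.single (Sum.inr (Sum.inr j)) 1) =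
      (Pi.single j 1 - Pi.single (j + (m:ZMod (2*m)) - 1) 1)
      + (Pi.single (j + (m:ZMod (2*m))) 1 - Pi.single (j + (m:ZMod (2*m)) + 1) 1) := by
    intro j
    rw [hφc j, Finset.sum_congr rfl (fun (l : ℕ) _ => hf (j + (l : ZMod (2*m)))),
      aux_tel (2*m) (fun a => Pi.single a 1) j (m-1), hf]
    have : ((m - 1 : ℕ) : ZMod (2*m)) = (m : ZMod (2*m)) - 1 := by
      rw [Nat.cast_sub (by omega)]; norm_num
    rw [this, show j + ((m:ZMod (2*m)) - 1) = j + (m:ZMod (2*m)) - 1 from by ring]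
  have hker : ∀ t, φ (B t) = 0 := by
    rintro (i | i | ⟨⟩)
    · rw [hB1 i, map_add, hφa, hφb]
      abel
    · rw [hB2 i]
      simp only [map_sub, map_add]
      rw [hφa i, hφb (i-1), hφc', hφc']
      simp only [hf]
      refine aux_key1 (2*m) (fun a => Pi.single a 1) (m : ZMod (2*m))
        ((i.val : ZMod (2*m))) (((i-1).val : ZMod (2*m))) hmm ?_
      apply aux_fiber m hm
      rw [map_sub, map_one, aux_rho_val m hm, aux_rho_val m hm]
    · rw [hB3, map_sum]
      rw [Finset.sum_congr rfl (fun i _ => by rw [hφa i, hf, hf])]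
      exact aux_sum0 m hm (fun a => Pi.single a 1)
  -- ρ and val facts
  set ρ : ZMod (2*m) →+* ZMod m := ZMod.castHom (⟨2, by ring⟩ : m ∣ 2*m) (ZMod m) with hρdef
  have hval1 : ∀ i : ZMod m, ((i.val : ZMod (2*m))).val = i.val := fun i =>
    ZMod.val_cast_of_lt (lt_of_lt_of_le (ZMod.val_lt i) (by omega))
  have hval2 : ∀ i : ZMod m, ((m : ZMod (2*m)) + (i.val : ZMod (2*m))).val = m + i.val := by
    intro i
    have h1 : (m + i.val : ℕ) < 2*m := by have := ZMod.val_lt i; omega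
    rw [show (m : ZMod (2*m)) + (i.val : ZMod (2*m)) = ((m + i.val : ℕ) : ZMod (2*m)) from by
      push_cast; ring, ZMod.val_cast_of_lt h1]
  have hinj : ∀ i j : ZMod m, ((i.val : ZMod (2*m)) = (j.val : ZMod (2*m))) ↔ i = j := by
    intro i j
    constructor
    · intro h
      have h2 := congrArg ZMod.val h
      rw [hval1, hval1] at h2
      rw [← ZMod.natCast_zmod_val i, ← ZMod.natCast_zmod_val j, h2]
    · rintro rfl; rfl
  have hne1 : ∀ i j : ZMod m, ¬((i.val : ZMod (2*m)) = (m : ZMod (2*m)) + (j.val : ZMod (2*m))) := by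
    intro i j h
    have h2 := congrArg ZMod.val h
    rw [hval1, hval2] at h2
    have := ZMod.val_lt i; omega
  have hinjm : ∀ i j : ZMod m,
      ((m:ZMod (2*m)) + (i.val : ZMod (2*m)) = (m : ZMod (2*m)) + (j.val : ZMod (2*m))) ↔ i = j := by
    intro i j; rw [add_right_inj, hinj]
  have hrhoval : ∀ i : ZMod m, ρ ((i.val : ZMod (2*m))) = i := fun i => aux_rho_val m hm i
  have hrhom : ∀ x : ZMod (2*m), ρ (x + (m:ZMod (2*m))) = ρ x := by
    intro x; rw [map_add, map_natCast, ZMod.natCast_self, add_zero]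
  have hhalf : ∀ k : ZMod (2*m), k = (((ρ k).val : ZMod (2*m))) ∨
      k = (m:ZMod (2*m)) + ((ρ k).val : ZMod (2*m)) := fun k => aux_half m hm k
  have hfib : ∀ (a b : ZMod (2*m)), ρ a = ρ b → b = a ∨ b = a + m :=
    fun a b h => aux_fiber m hm a b h
  have hindic : ∀ (k : ZMod (2*m)) (i : ZMod m),
      ((if k = (i.val : ZMod (2*m)) then (1:ℤ) else 0)
        + (if k = (m:ZMod (2*m)) + (i.val : ZMod (2*m)) then 1 else 0))
      = (if i = ρ k then 1 else 0) := by
    intro k i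
    rcases hhalf k with hk | hk <;> by_cases h : i = ρ k
    · rw [if_pos (by rw [h]; exact hk), if_neg (fun hc => hne1 (ρ k) i (hk.symm.trans hc)),
        if_pos h]
      norm_num
    · rw [if_neg (fun hc => h ((hinj (ρ k) i).1 (hk.symm.trans hc)).symm),
        if_neg (fun hc => hne1 (ρ k) i (hk.symm.trans hc)), if_neg h]
      norm_num
    · rw [if_neg (fun hc => hne1 i (ρ k) (hc.symm.trans hk)),
        if_pos (by rw [h]; exact hk), if_pos h]
      norm_num
    · rw [if_neg (fun hc => hne1 i (ρ k) (hc.symm.trans hk)),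
        if_neg (fun hc => h ((hinjm (ρ k) i).1 (hk.symm.trans hc)).symm), if_neg h]
      norm_num
  -- the retraction
  let r : ((ZMod m ⊕ ZMod m ⊕ ZMod (2*m)) → ℤ) →ₗ[ℤ] ((ZMod m ⊕ ZMod m ⊕ Unit) → ℤ) :=
    { toFun := fun v t =>
        match t with
        | Sum.inl i => v (Sum.inr (Sum.inl i)) + v (Sum.inr (Sum.inr (((i+1).val : ZMod (2*m)))))
        | Sum.inr (Sum.inl i) => - v (Sum.inr (Sum.inr ((i.val : ZMod (2*m)))))
        | Sum.inr (Sum.inr _) => v (Sum.inl 0) - v (Sum.inr (Sum.inl 0))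
            - v (Sum.inr (Sum.inr ((((0:ZMod m)+1).val : ZMod (2*m)))))
            + v (Sum.inr (Sum.inr (((0:ZMod m).val : ZMod (2*m))))),
      map_add' := by intro v w; funext t; rcases t with i | i | t <;> simp only [Pi.add_apply] <;> ring
      map_smul' := by
        intro c v; funext t
        rcases t with i | i | t <;>
          simp only [Pi.smul_apply, smul_eq_mul, RingHom.id_apply] <;> ring }
  have rA : ∀ (v : (ZMod m ⊕ ZMod m ⊕ ZMod (2*m)) → ℤ) (j : ZMod m), r v (Sum.inl j)
      = v (Sum.inr (Sum.inl j)) + v (Sum.inr (Sum.inr (((j+1).val : ZMod (2*m))))) := fun _ _ => rfl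
  have rB : ∀ (v : (ZMod m ⊕ ZMod m ⊕ ZMod (2*m)) → ℤ) (j : ZMod m), r v (Sum.inr (Sum.inl j))
      = - v (Sum.inr (Sum.inr ((j.val : ZMod (2*m))))) := fun _ _ => rfl
  have rC : ∀ (v : (ZMod m ⊕ ZMod m ⊕ ZMod (2*m)) → ℤ), r v (Sum.inr (Sum.inr ()))
      = v (Sum.inl 0) - v (Sum.inr (Sum.inl 0))
        - v (Sum.inr (Sum.inr ((((0:ZMod m)+1).val : ZMod (2*m)))))
        + v (Sum.inr (Sum.inr (((0:ZMod m).val : ZMod (2*m))))) := fun _ => rfl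
  -- values of B
  have hB1A : ∀ i j : ZMod m, B (Sum.inl i) (Sum.inl j) = if j = i then (1:ℤ) else 0 := by
    intro i j; rw [hB1]; simp [Pi.single_apply]
  have hB1B : ∀ i j : ZMod m, B (Sum.inl i) (Sum.inr (Sum.inl j)) = if j = i then (1:ℤ) else 0 := by
    intro i j; rw [hB1]; simp [Pi.single_apply]
  have hB1C : ∀ (i : ZMod m) (j : ZMod (2*m)), B (Sum.inl i) (Sum.inr (Sum.inr j)) = 0 := by
    intro i j; rw [hB1]; simp [Pi.single_apply]
  have hB2A : ∀ i j : ZMod m, B (Sum.inr (Sum.inl i)) (Sum.inl j) = if j = i then (1:ℤ) else 0 := by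
    intro i j; rw [hB2]; simp [Pi.single_apply]
  have hB2B : ∀ i j : ZMod m, B (Sum.inr (Sum.inl i)) (Sum.inr (Sum.inl j))
      = if j = i - 1 then (1:ℤ) else 0 := by
    intro i j; rw [hB2]; simp [Pi.single_apply]
  have hB2C : ∀ (i : ZMod m) (j : ZMod (2*m)), B (Sum.inr (Sum.inl i)) (Sum.inr (Sum.inr j))
      = -(if i = ρ j then (1:ℤ) else 0) := by
    intro i j; rw [hB2, ← hindic j i]
    simp [Pi.single_apply]
    ring
  have hB3A : ∀ j : ZMod m, B (Sum.inr (Sum.inr ())) (Sum.inl j) = 1 := by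
    intro j; rw [hB3, Finset.sum_apply]
    simp [Pi.single_apply, Finset.sum_ite_eq]
  have hB3B : ∀ j : ZMod m, B (Sum.inr (Sum.inr ())) (Sum.inr (Sum.inl j)) = 0 := by
    intro j; rw [hB3, Finset.sum_apply]; simp [Pi.single_apply]
  have hB3C : ∀ j : ZMod (2*m), B (Sum.inr (Sum.inr ())) (Sum.inr (Sum.inr j)) = 0 := by
    intro j; rw [hB3, Finset.sum_apply]; simp [Pi.single_apply]
  -- r (B t) = Pi.single t 1
  have hrB : ∀ t, r (B t) = Pi.single t (1:ℤ) := by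
    have hiffm : ∀ i j : ZMod m, (j = i - 1) ↔ (j + 1 = i) := fun i j => eq_sub_iff_add_eq
    rintro (i | i | ⟨⟩) <;> funext s <;> rcases s with j | j | ⟨⟩
    · rw [rA, hB1B, hB1C]
      simp [Pi.single_apply]
    · rw [rB, hB1C]
      simp [Pi.single_apply]
    · rw [rC, hB1A, hB1B, hB1C, hB1C]
      simp [Pi.single_apply]
    · rw [rA, hB2B, hB2C, hrhoval]
      simp only [show (j = i - 1) = (i = j + 1) from propext (eq_sub_iff_add_eq.trans eq_comm)]
      simp [Pi.single_apply]
    · rw [rB, hB2C, hrhoval, neg_neg]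
      simp only [show ((i : ZMod m) = j) = (j = i) from propext eq_comm]
      simp [Pi.single_apply]
    · rw [rC, hB2A, hB2B, hB2C, hB2C, hrhoval, hrhoval]
      simp only [show ((0:ZMod m) = i - 1) = (i = 0 + 1) from
          propext (eq_sub_iff_add_eq.trans eq_comm),
        show ((0:ZMod m) = i) = (i = 0) from propext eq_comm]
      simp [Pi.single_apply]
    · rw [rA, hB3B, hB3C]
      simp [Pi.single_apply]
    · rw [rB, hB3C]
      simp [Pi.single_apply]
    · rw [rC, hB3A, hB3B, hB3C, hB3C]
      simp [Pi.single_apply]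
  -- linear independence
  have hsingle_li : LinearIndependent ℤ
      (fun t : (ZMod m ⊕ ZMod m ⊕ Unit) => Pi.single t (1:ℤ)) := by
    rw [Fintype.linearIndependent_iff]
    intro c hc t
    have h2 := congrFun hc t
    rw [Finset.sum_apply] at h2
    simpa [Pi.single_apply, Finset.sum_ite_eq] using h2
  have hli : LinearIndependent ℤ B := by
    apply LinearIndependent.of_comp r
    have : ⇑r ∘ B = fun t => Pi.single t (1:ℤ) := funext hrB
    rw [this]; exact hsingle_li
  -- sums evaluated coordinatewise
  have hsum3 : ∀ (w : (ZMod m ⊕ ZMod m ⊕ Unit) → ℤ) (s : ZMod m ⊕ ZMod m ⊕ ZMod (2*m)),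
      (∑ t, w t • B t) s = (∑ i : ZMod m, w (Sum.inl i) * B (Sum.inl i) s)
        + (∑ i : ZMod m, w (Sum.inr (Sum.inl i)) * B (Sum.inr (Sum.inl i)) s)
        + w (Sum.inr (Sum.inr ())) * B (Sum.inr (Sum.inr ())) s := by
    intro w s
    rw [Finset.sum_apply, Fintype.sum_sum_type, Fintype.sum_sum_type]
    simp only [Pi.smul_apply, smul_eq_mul]
    rw [show (∑ x : Unit, w (Sum.inr (Sum.inr x)) * B (Sum.inr (Sum.inr x)) s)
      = w (Sum.inr (Sum.inr ())) * B (Sum.inr (Sum.inr ())) s from Fintype.sum_unique _]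
    ring
  have hiff : ∀ (a b : ZMod (2*m)), (a = b + 1) ↔ (a - 1 = b) :=
    fun a b => ⟨fun h => by linear_combination h, fun h => by linear_combination h⟩
  -- span = ker
  have hspan : Submodule.span ℤ (Set.range B) = LinearMap.ker φ := by
    apply le_antisymm
    · rw [Submodule.span_le]
      rintro x ⟨t, rfl⟩
      exact LinearMap.mem_ker.2 (hker t)
    · intro v hv
      have hv0 : φ v = 0 := LinearMap.mem_ker.1 hv
      set C : ZMod (2*m) → ℤ := fun j => v (Sum.inr (Sum.inr j)) with hCdef
      have hCfold : ∀ x, v (Sum.inr (Sum.inr x)) = C x := fun x => by rw [hCdef]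
      -- expansion of φ v
      have hveq : (0:ZMod (2*m) → ℤ) = ∑ t, v t • φ (Pi.single t 1) := by
        rw [← hv0]
        conv_lhs => rw [← Finset.univ_sum_single v]
        rw [map_sum]
        refine Finset.sum_congr rfl (fun t _ => ?_)
        rw [← map_smul]
        congr 1
        ext u; by_cases h : u = t <;> simp [Pi.single_apply, h]
      have h0 : ∀ k, (∑ i : ZMod m, (v (Sum.inl i) - v (Sum.inr (Sum.inl i)))
            * (φ (Pi.single (Sum.inl i) 1) k))
          + (∑ j : ZMod (2*m), C j * (φ (Pi.single (Sum.inr (Sum.inr j)) 1) k)) = 0 := by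
        intro k
        have h1 := congrFun hveq k
        rw [Finset.sum_apply, Fintype.sum_sum_type, Fintype.sum_sum_type] at h1
        simp only [Pi.smul_apply, smul_eq_mul] at h1
        have hneg : ∀ i : ZMod m, φ (Pi.single (Sum.inr (Sum.inl i)) 1)
            = - φ (Pi.single (Sum.inl i) 1) := by
          intro i; rw [hφa, hφb]
        simp only [hneg, Pi.neg_apply, Pi.zero_apply, mul_neg, hCfold] at h1
        rw [Finset.sum_neg_distrib] at h1
        rw [Finset.sum_congr rfl (fun (i : ZMod m) _ =>
          sub_mul (v (Sum.inl i)) (v (Sum.inr (Sum.inl i))) (φ (Pi.single (Sum.inl i) 1) k)),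
          Finset.sum_sub_distrib]
        linarith [h1]
      -- pointwise form of the generators
      have hX : ∀ (i : ZMod m) (k : ZMod (2*m)), φ (Pi.single (Sum.inl i) 1) k =
          ((if k = (i.val : ZMod (2*m)) then (1:ℤ) else 0)
            + (if k = (m:ZMod (2*m)) + (i.val : ZMod (2*m)) then 1 else 0))
          - ((if k - 1 = (i.val : ZMod (2*m)) then (1:ℤ) else 0)
            + (if k - 1 = (m:ZMod (2*m)) + (i.val : ZMod (2*m)) then 1 else 0)) := by
        intro i k
        rw [hφa, hf, hf]
        simp only [Pi.add_apply, Pi.sub_apply, Pi.single_apply]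
        simp only [hiff]
        ring
      have hDsum : ∀ k, (∑ i : ZMod m, (v (Sum.inl i) - v (Sum.inr (Sum.inl i)))
            * (φ (Pi.single (Sum.inl i) 1) k))
          = (v (Sum.inl (ρ k)) - v (Sum.inr (Sum.inl (ρ k))))
            - (v (Sum.inl (ρ (k-1))) - v (Sum.inr (Sum.inl (ρ (k-1))))) := by
        intro k
        rw [Finset.sum_congr rfl (fun (i : ZMod m) _ => by rw [hX i k])]
        simp only [mul_sub]
        rw [Finset.sum_sub_distrib]
        simp only [hindic]
        rw [aux_sum_ite (fun i : ZMod m => v (Sum.inl i) - v (Sum.inr (Sum.inl i)))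
            (fun i => i = ρ k) (ρ k) (fun j => Iff.rfl),
          aux_sum_ite (fun i : ZMod m => v (Sum.inl i) - v (Sum.inr (Sum.inl i)))
            (fun i => i = ρ (k-1)) (ρ (k-1)) (fun j => Iff.rfl)]
      have hCsum : ∀ k, (∑ j : ZMod (2*m), C j * (φ (Pi.single (Sum.inr (Sum.inr j)) 1) k)) =
          C k - C (k + 1 - (m:ZMod (2*m)))
            + (C (k - (m:ZMod (2*m))) - C (k - (m:ZMod (2*m)) - 1)) := by
        intro k
        rw [Finset.sum_congr rfl (fun (j : ZMod (2*m)) _ => by rw [hφc' j])]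
        simp only [Pi.add_apply, Pi.sub_apply, Pi.single_apply]
        simp only [mul_sub, mul_add]
        rw [Finset.sum_add_distrib, Finset.sum_sub_distrib, Finset.sum_sub_distrib]
        rw [aux_sum_ite C (fun j => k = j) k (fun j => eq_comm),
          aux_sum_ite C (fun j => k = j + (m:ZMod (2*m)) - 1) (k + 1 - (m:ZMod (2*m)))
            (fun j => ⟨fun h => by linear_combination -h, fun h => by linear_combination -h⟩),
          aux_sum_ite C (fun j => k = j + (m:ZMod (2*m))) (k - (m:ZMod (2*m)))
            (fun j => ⟨fun h => by linear_combination -h, fun h => by linear_combination -h⟩),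
          aux_sum_ite C (fun j => k = j + (m:ZMod (2*m)) + 1) (k - (m:ZMod (2*m)) - 1)
            (fun j => ⟨fun h => by linear_combination -h, fun h => by linear_combination -h⟩)]
      have hE : ∀ k, ((v (Sum.inl (ρ k)) - v (Sum.inr (Sum.inl (ρ k))))
            - (v (Sum.inl (ρ (k-1))) - v (Sum.inr (Sum.inl (ρ (k-1))))))
          + (C k - C (k + 1 - (m:ZMod (2*m)))
            + (C (k - (m:ZMod (2*m))) - C (k - (m:ZMod (2*m)) - 1))) = 0 :=
        fun k => by rw [← hDsum k, ← hCsum k]; exact h0 k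
      -- R2 : C is m-periodic
      have hS2 : ∀ k : ZMod (2*m), (C (k+1) - C (k+1+(m:ZMod (2*m))))
          = -(C (k-1) - C (k-1+(m:ZMod (2*m)))) := by
        intro k
        have e1 := hE k
        have e2 := hE (k + (m:ZMod (2*m)))
        rw [show k + (m:ZMod (2*m)) - 1 = (k - 1) + (m:ZMod (2*m)) from by ring,
          hrhom k, hrhom (k-1),
          show k + (m:ZMod (2*m)) + 1 - (m:ZMod (2*m)) = k + 1 from by ring,
          show k + (m:ZMod (2*m)) - (m:ZMod (2*m)) = k from by ring] at e2
        rw [show k + 1 - (m:ZMod (2*m)) = k + 1 + (m:ZMod (2*m)) from by linear_combination -hmm,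
          show k - (m:ZMod (2*m)) = k + (m:ZMod (2*m)) from by linear_combination -hmm,
          show k + (m:ZMod (2*m)) - 1 = k - 1 + (m:ZMod (2*m)) from by ring] at e1
        linear_combination e1 - e2
      have hSstep : ∀ k : ZMod (2*m), C (k + 2) - C (k + 2 + (m:ZMod (2*m)))
          = -(C k - C (k + (m:ZMod (2*m)))) := by
        intro k
        have h1 := hS2 (k+1)
        rw [show k+1+1 = k+2 from by ring, show k+1-1 = k from by ring] at h1
        exact h1
      have hSpow : ∀ (t : ℕ) (k : ZMod (2*m)),
          C (k + ((2*t : ℕ) : ZMod (2*m))) - C (k + ((2*t : ℕ) : ZMod (2*m)) + (m:ZMod (2*m)))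
          = (-1)^t * (C k - C (k + (m:ZMod (2*m)))) := by
        intro t
        induction t with
        | zero => intro k; simp
        | succ t ih =>
          intro k
          have h1 := hSstep (k + ((2*t : ℕ) : ZMod (2*m)))
          rw [show k + ((2*t:ℕ) : ZMod (2*m)) + 2 = k + ((2*(t+1) : ℕ) : ZMod (2*m)) from by
            push_cast; ring] at h1
          rw [h1, ih k, pow_succ]
          ring
      have hR2 : ∀ k : ZMod (2*m), C (k + (m:ZMod (2*m))) = C k := by
        intro k
        have h1 := hSpow m k
        rw [show ((2*m : ℕ) : ZMod (2*m)) = 0 from ZMod.natCast_self _, add_zero,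
          hodd.neg_one_pow] at h1
        linarith
      -- the dagger relations
      have hrho1 : ∀ x : ZMod (2*m), ρ (x - 1) = ρ x - 1 := fun x => by rw [map_sub, map_one]
      have hdag : ∀ i : ZMod m, (v (Sum.inl i) - v (Sum.inr (Sum.inl i)))
          - (v (Sum.inl (i-1)) - v (Sum.inr (Sum.inl (i-1))))
          + (C ((i.val : ZMod (2*m))) - C ((i.val : ZMod (2*m)) + 1)
            + (C ((i.val : ZMod (2*m))) - C ((i.val : ZMod (2*m)) - 1))) = 0 := by
        intro i
        have e := hE ((i.val : ZMod (2*m)))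
        rw [hrho1, hrhoval i] at e
        rw [show (i.val : ZMod (2*m)) + 1 - (m:ZMod (2*m))
              = ((i.val : ZMod (2*m)) + 1) + (m:ZMod (2*m)) from by linear_combination -hmm,
          hR2 ((i.val : ZMod (2*m)) + 1),
          show (i.val : ZMod (2*m)) - (m:ZMod (2*m))
              = (i.val : ZMod (2*m)) + (m:ZMod (2*m)) from by linear_combination -hmm] at e
        rw [show (i.val : ZMod (2*m)) + (m:ZMod (2*m)) - 1
              = ((i.val : ZMod (2*m)) - 1) + (m:ZMod (2*m)) from by ring,
          hR2 ((i.val : ZMod (2*m)) - 1), hR2 ((i.val : ZMod (2*m)))] at e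
        linear_combination e
      have hCnext : ∀ i : ZMod m, C ((((i+1).val : ZMod (2*m))))
          = C (((i.val : ZMod (2*m))) + 1) := by
        intro i
        rcases hfib (((i.val : ZMod (2*m))) + 1) (((i+1).val : ZMod (2*m)))
          (by rw [map_add, map_one, hrhoval, hrhoval]) with h | h
        · rw [h]
        · rw [h, hR2]
      have hCprev : ∀ i : ZMod m, C ((((i-1).val : ZMod (2*m))))
          = C (((i.val : ZMod (2*m))) - 1) := by
        intro i
        rcases hfib (((i.val : ZMod (2*m))) - 1) (((i-1).val : ZMod (2*m)))
          (by rw [map_sub, map_one, hrhoval, hrhoval]) with h | h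
        · rw [h]
        · rw [h, hR2]
      -- g is constant
      have hgstep : ∀ i : ZMod m,
          (v (Sum.inl i) - v (Sum.inr (Sum.inl i))) - C ((((i+1).val : ZMod (2*m))))
            + C ((i.val : ZMod (2*m)))
          = (v (Sum.inl (i-1)) - v (Sum.inr (Sum.inl (i-1)))) - C ((((i-1+1).val : ZMod (2*m))))
            + C (((i-1).val : ZMod (2*m))) := by
        intro i
        rw [show i - 1 + 1 = i from by ring, hCnext i, hCprev i]
        linear_combination hdag i
      have hgconst : ∀ i : ZMod m,
          (v (Sum.inl i) - v (Sum.inr (Sum.inl i))) - C ((((i+1).val : ZMod (2*m))))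
            + C ((i.val : ZMod (2*m)))
          = (v (Sum.inl 0) - v (Sum.inr (Sum.inl 0))) - C (((((0:ZMod m)+1).val : ZMod (2*m))))
            + C ((((0:ZMod m)).val : ZMod (2*m))) := by
        have hnat : ∀ t : ℕ,
            (v (Sum.inl ((t : ZMod m))) - v (Sum.inr (Sum.inl ((t : ZMod m)))))
              - C (((((t : ZMod m))+1).val : ZMod (2*m)))
              + C ((((t : ZMod m)).val : ZMod (2*m)))
            = (v (Sum.inl 0) - v (Sum.inr (Sum.inl 0))) - C (((((0:ZMod m)+1).val : ZMod (2*m))))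
              + C ((((0:ZMod m)).val : ZMod (2*m))) := by
          intro t
          induction t with
          | zero => norm_num
          | succ t ih =>
            have h1 := hgstep (((t+1:ℕ) : ZMod m))
            rw [show ((t+1:ℕ) : ZMod m) - 1 = ((t:ℕ) : ZMod m) from by push_cast; ring] at h1
            rw [h1]
            exact ih
        intro i
        have h1 := hnat i.val
        rwa [ZMod.natCast_zmod_val i] at h1
      have hCrep : ∀ k : ZMod (2*m), C (((ρ k).val : ZMod (2*m))) = C k := by
        intro k
        rcases hhalf k with hk | hk
        · rw [← hk]
        · conv_rhs => rw [hk]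
          rw [show (m:ZMod (2*m)) + (((ρ k).val : ZMod (2*m)))
            = (((ρ k).val : ZMod (2*m))) + (m:ZMod (2*m)) from by ring, hR2]
      -- reconstruction
      have hrepr : v = ∑ t, (r v t) • B t := by
        funext s
        rw [hsum3 (fun t => r v t) s]
        rcases s with j | j | j
        · simp only [hB1A, hB2A, hB3A]
          rw [aux_sum_ite (fun i : ZMod m => r v (Sum.inl i)) (fun i => j = i) j
              (fun i => eq_comm),
            aux_sum_ite (fun i : ZMod m => r v (Sum.inr (Sum.inl i))) (fun i => j = i) j
              (fun i => eq_comm)]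
          rw [rA, rB, rC]
          simp only [hCfold]
          linear_combination hgconst j
        · simp only [hB1B, hB2B, hB3B]
          rw [aux_sum_ite (fun i : ZMod m => r v (Sum.inl i)) (fun i => j = i) j
              (fun i => eq_comm),
            aux_sum_ite (fun i : ZMod m => r v (Sum.inr (Sum.inl i))) (fun i => j = i - 1) (j+1)
              (fun i => eq_sub_iff_add_eq.trans eq_comm)]
          rw [rA, rB]
          simp only [hCfold]
          ring
        · simp only [hB1C, hB2C, hB3C]
          simp only [mul_neg, mul_zero]
          rw [Finset.sum_const_zero]
          rw [show (∑ i : ZMod m, -(r v (Sum.inr (Sum.inl i)) * if i = ρ j then (1:ℤ) else 0))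
            = -(∑ i : ZMod m, (r v (Sum.inr (Sum.inl i)) * if i = ρ j then (1:ℤ) else 0)) from
            (Finset.sum_neg_distrib _)]
          rw [aux_sum_ite (fun i : ZMod m => r v (Sum.inr (Sum.inl i))) (fun i => i = ρ j) (ρ j)
              (fun i => Iff.rfl)]
          rw [rB]
          simp only [hCfold]
          rw [hCrep j]
          ring
      rw [hrepr]
      exact Submodule.sum_mem _ (fun t _ => Submodule.smul_mem _ _
        (Submodule.subset_span ⟨t, rfl⟩))
  refine ⟨hker, hli, hspan, ?_⟩
  have hcard : Fintype.card (ZMod m ⊕ ZMod m ⊕ Unit) = 2*m + 1 := by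
    simp [ZMod.card]; ring
  rw [← hspan]
  rw [Module.finrank_eq_card_basis (Module.Basis.span hli)]
  exact hcard
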